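/- With G₂(x) = e^{4x}/8 − (x/2)e^{2x} − 1/8 and G₁(x) = (e^{2x}-1)/2, one has ∫_0^1 (1-x)² G₁(x) G₂(x) dx = e⁶/1728 − e⁴/256 − 3e²/64 + 2447/6912. -/

import Mathlib

/-- With `G₁(x) = (e^{2x}-1)/2` and `G₂(x) = e^{4x}/8 − (x/2)e^{2x} − 1/8`,
`∫_0^1 (1-x)² G₁(x) G₂(x) dx = e⁶/1728 − e⁴/256 − 3e²/64 + 2447/6912`. -/
theorem stmt_9 :
    ∫ x in (0 : ℝ)..1,
        (1 - x) ^ 2 * ((Real.exp (2 * x) - 1) / 2)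
          * (Real.exp (4 * x) / 8 - x / 2 * Real.exp (2 * x) - 1 / 8)
      = Real.exp 6 / 1728 - Real.exp 4 / 256 - 3 * Real.exp 2 / 64 + 2447 / 6912 := by
  have key : ∀ x : ℝ, HasDerivAt
      (fun x : ℝ => Real.exp (6 * x) * (18 * x ^ 2 - 42 * x + 25) / 1728
        + Real.exp (4 * x) * (-16 * x ^ 3 + 40 * x ^ 2 - 28 * x + 3) / 256
        + Real.exp (2 * x) * (8 * x ^ 3 - 30 * x ^ 2 + 42 * x - 23) / 64
        + (x - 1) ^ 3 / 48)
      ((1 - x) ^ 2 * ((Real.exp (2 * x) - 1) / 2)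
        * (Real.exp (4 * x) / 8 - x / 2 * Real.exp (2 * x) - 1 / 8)) x := by
    intro x
    have h6 : HasDerivAt (fun x : ℝ => Real.exp (6 * x)) (Real.exp (6 * x) * (6 * 1)) x :=
      ((hasDerivAt_id x).const_mul 6).exp
    have h4 : HasDerivAt (fun x : ℝ => Real.exp (4 * x)) (Real.exp (4 * x) * (4 * 1)) x :=
      ((hasDerivAt_id x).const_mul 4).exp
    have h2 : HasDerivAt (fun x : ℝ => Real.exp (2 * x)) (Real.exp (2 * x) * (2 * 1)) x :=
      ((hasDerivAt_id x).const_mul 2).exp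
    have p6 : HasDerivAt (fun x : ℝ => 18 * x ^ 2 - 42 * x + 25) (36 * x - 42) x := by
      have := ((hasDerivAt_pow 2 x).const_mul 18).sub ((hasDerivAt_id x).const_mul 42)
      have := this.add_const 25
      refine this.congr_deriv ?_; ring
    have p4 : HasDerivAt (fun x : ℝ => -16 * x ^ 3 + 40 * x ^ 2 - 28 * x + 3)
        (-48 * x ^ 2 + 80 * x - 28) x := by
      have := (((hasDerivAt_pow 3 x).const_mul (-16)).add
        ((hasDerivAt_pow 2 x).const_mul 40)).sub ((hasDerivAt_id x).const_mul 28)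
      have := this.add_const 3
      refine this.congr_deriv ?_; ring
    have p2 : HasDerivAt (fun x : ℝ => 8 * x ^ 3 - 30 * x ^ 2 + 42 * x - 23)
        (24 * x ^ 2 - 60 * x + 42) x := by
      have := (((hasDerivAt_pow 3 x).const_mul 8).sub
        ((hasDerivAt_pow 2 x).const_mul 30)).add ((hasDerivAt_id x).const_mul 42)
      have := this.sub_const 23
      refine this.congr_deriv ?_; ring
    have pc : HasDerivAt (fun x : ℝ => (x - 1) ^ 3 / 48) ((x - 1) ^ 2 / 16) x := by
      have h1 : HasDerivAt (fun x : ℝ => x - 1) 1 x := (hasDerivAt_id x).sub_const 1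
      have := (h1.pow 3).div_const 48
      refine this.congr_deriv ?_
      simp; ring
    have := ((((h6.mul p6).div_const 1728).add
      ((h4.mul p4).div_const 256)).add
      ((h2.mul p2).div_const 64)).add pc
    refine this.congr_deriv ?_
    have e6 : Real.exp (6 * x) = Real.exp (2 * x) * Real.exp (4 * x) := by
      rw [← Real.exp_add]; ring_nf
    have e4 : Real.exp (4 * x) = Real.exp (2 * x) * Real.exp (2 * x) := by
      rw [← Real.exp_add]; ring_nf
    rw [e6, e4]; ring
  have hcont : Continuous fun x : ℝ =>
      (1 - x) ^ 2 * ((Real.exp (2 * x) - 1) / 2)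
        * (Real.exp (4 * x) / 8 - x / 2 * Real.exp (2 * x) - 1 / 8) := by
    continuity
  rw [intervalIntegral.integral_eq_sub_of_hasDerivAt (fun x _ => key x)
    (hcont.intervalIntegrable 0 1)]
  norm_num
  ring
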